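/- Let N_{j,t} count the draws of color c_j up to time t in the expanding-color Pólya urn, and fix 1 ≤ k ≤ t−j+1 and 1 < j ≤ t. Then P(N_{j,t} = k) = Σ over tuples (i_1 < i_2 < ⋯ < i_k) with j ≤ i_1 and i_k ≤ t of [∏_{a=1}^{k} (1 + Σ_{b=1}^{a−1} Δ_{i_b}) · ∏_{p=j, p ∉ {i_1,…,i_k}}^{t} ((p−1) + Σ_{l=1, l ∉ {i_1,…,i_k}}^{p−1} Δ_l)] / ∏_{n=j−1}^{t−1} ((n+1) + Σ_{m=1}^{n} Δ_m). -/

import Mathlib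

open MeasureTheory Finset

/-- Proportion of `c_j`-colored balls in the urn just before the `n`-th draw, given the
history `h` of past draws. -/
noncomputable def urnRatio (Δ : ℕ → ℝ) (j n : ℕ) (h : ℕ → ℕ) : ℝ :=
  (1 + ∑ m ∈ Finset.Icc j (n - 1), Δ m * (if h m = j then 1 else 0)) /
    ((n : ℝ) + ∑ k ∈ Finset.Icc 1 (n - 1), Δ k)

/-- Number of times color `c_j` is drawn up to and including time `t`. -/
noncomputable def drawCount (D : ℕ → Ω → ℕ) (j t : ℕ) (ω : Ω) : ℕ :=
  ((Finset.Icc j t).filter fun n => D n ω = j).card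

lemma iccSuccInsert (a b : ℕ) (h : a ≤ b+1) : Finset.Icc a (b+1) = insert (b+1) (Finset.Icc a b) := by
  ext x; simp only [Finset.mem_Icc, Finset.mem_insert]; omega

/-- history vector -/
def vOf (D : ℕ → Ω → ℕ) (N : ℕ) (ω : Ω) : Fin N → ℕ := fun i => D (i.val + 1) ω

def Gset (D : ℕ → Ω → ℕ) (N : ℕ) (v : Fin N → ℕ) : Set Ω := {ω | ∀ i : Fin N, D (i.val + 1) ω = v i}

def Eev (D : ℕ → Ω → ℕ) (j N : ℕ) (T : Finset ℕ) : Set Ω :=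
  {ω | ∀ m ∈ Finset.Icc j N, (D m ω = j ↔ m ∈ T)}

lemma mem_Gset_iff {Ω : Type*} (D : ℕ → Ω → ℕ) (N : ℕ) (v : Fin N → ℕ) (ω : Ω) :
    ω ∈ Gset D N v ↔ vOf D N ω = v := by
  constructor
  · intro h; funext i; exact h i
  · intro h i; exact congrFun h i

lemma Gset_meas {Ω : Type*} [MeasurableSpace Ω] {D : ℕ → Ω → ℕ} (hD : ∀ n, Measurable (D n))
    (N : ℕ) (v : Fin N → ℕ) : MeasurableSet (Gset D N v) := by
  have : Gset D N v = ⋂ i : Fin N, (D (i.val + 1)) ⁻¹' {v i} := by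
    ext ω; simp [Gset, Set.mem_iInter]
  rw [this]
  exact MeasurableSet.iInter fun i => (hD _) (measurableSet_singleton _)

lemma Eev_meas {Ω : Type*} [MeasurableSpace Ω] {D : ℕ → Ω → ℕ} (hD : ∀ n, Measurable (D n))
    (j N : ℕ) (T : Finset ℕ) : MeasurableSet (Eev D j N T) := by
  have : Eev D j N T = ⋂ m ∈ (Finset.Icc j N : Finset ℕ), {ω | D m ω = j ↔ m ∈ T} := by
    ext ω; simp [Eev, Set.mem_iInter]
  rw [this]
  refine MeasurableSet.biInter (Finset.Icc j N).countable_toSet fun m _ => ?_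
  by_cases hm : m ∈ T
  · have : {ω : Ω | D m ω = j ↔ m ∈ T} = (D m) ⁻¹' {j} := by ext ω; simp [hm]
    rw [this]; exact (hD m) (measurableSet_singleton _)
  · have : {ω : Ω | D m ω = j ↔ m ∈ T} = ((D m) ⁻¹' {j})ᶜ := by ext ω; simp [hm]
    rw [this]; exact ((hD m) (measurableSet_singleton _)).compl

/-- partition over histories -/
lemma partition_lemma {Ω : Type*} [MeasurableSpace Ω] (μ : Measure Ω)
    {D : ℕ → Ω → ℕ} (hD : ∀ n, Measurable (D n))
    (hrange : ∀ n ω, 1 ≤ n → D n ω ∈ Finset.Icc 1 n)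
    (N : ℕ) (A : Set Ω) (hA : MeasurableSet A) (P : (Fin N → ℕ) → Prop) [DecidablePred P] :
    μ (A ∩ {ω | P (vOf D N ω)}) =
      ∑ v ∈ (Fintype.piFinset (fun i : Fin N => Finset.Icc 1 (i.val + 1))).filter P,
        μ (A ∩ Gset D N v) := by
  have hmem : ∀ ω : Ω, vOf D N ω ∈ Fintype.piFinset (fun i : Fin N => Finset.Icc 1 (i.val + 1)) := by
    intro ω; rw [Fintype.mem_piFinset]; intro i; exact hrange (i.val + 1) ω (Nat.succ_le_succ (Nat.zero_le _))
  have hunion : A ∩ {ω | P (vOf D N ω)} =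
      ⋃ v ∈ (Fintype.piFinset (fun i : Fin N => Finset.Icc 1 (i.val + 1))).filter P,
        (A ∩ Gset D N v) := by
    ext ω
    simp only [Set.mem_inter_iff, Set.mem_setOf_eq, Set.mem_iUnion, Finset.mem_filter, exists_prop]
    constructor
    · rintro ⟨hAω, hP⟩
      exact ⟨vOf D N ω, ⟨hmem ω, hP⟩, hAω, (mem_Gset_iff D N _ ω).2 rfl⟩
    · rintro ⟨v, ⟨_, hP⟩, hAω, hG⟩
      rw [mem_Gset_iff] at hG
      exact ⟨hAω, hG ▸ hP⟩
  rw [hunion]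
  refine measure_biUnion_finset ?_ fun v _ => hA.inter (Gset_meas hD N v)
  intro v _ w _ hvw
  refine Set.disjoint_left.2 fun ω hv hw => hvw ?_
  have h1 := (mem_Gset_iff D N v ω).1 hv.2
  have h2 := (mem_Gset_iff D N w ω).1 hw.2
  rw [← h1, h2]

lemma sum_delta_nonneg (Δ : ℕ → ℝ) (hΔ : ∀ n, 1 ≤ n → 0 < Δ n) (s : Finset ℕ)
    (hs : ∀ i ∈ s, 1 ≤ i) : 0 ≤ ∑ i ∈ s, Δ i :=
  Finset.sum_nonneg fun i hi => (hΔ i (hs i hi)).le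

lemma draw_step {Ω : Type*} [MeasurableSpace Ω] (μ : Measure Ω) [IsProbabilityMeasure μ]
    (Δ : ℕ → ℝ) {D : ℕ → Ω → ℕ} (hD : ∀ n, Measurable (D n))
    (hrange : ∀ n ω, 1 ≤ n → D n ω ∈ Finset.Icc 1 n)
    (hmodel : ∀ n, 1 ≤ n → ∀ j, 1 ≤ j → j ≤ n → ∀ h : ℕ → ℕ,
      μ ({ω | D n ω = j} ∩ {ω | ∀ m, 1 ≤ m → m < n → D m ω = h m}) =
        ENNReal.ofReal (urnRatio Δ j n h) *
          μ {ω | ∀ m, 1 ≤ m → m < n → D m ω = h m})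
    (j N : ℕ) (hj : 1 ≤ j) (hjN : j ≤ N + 1)
    (T : Finset ℕ) (hT : T ⊆ Finset.Icc j N) :
    μ ({ω | D (N+1) ω = j} ∩ Eev D j N T) =
      ENNReal.ofReal ((1 + ∑ i ∈ T, Δ i) / (((N:ℝ) + 1) + ∑ m ∈ Finset.Icc 1 N, Δ m)) *
        μ (Eev D j N T) := by
  classical
  set r : ℝ := (1 + ∑ i ∈ T, Δ i) / (((N:ℝ) + 1) + ∑ m ∈ Finset.Icc 1 N, Δ m) with hr
  set P : (Fin N → ℕ) → Prop :=
    fun v => ∀ i : Fin N, (i.val + 1 ∈ Finset.Icc j N → (v i = j ↔ i.val + 1 ∈ T)) with hP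
  have hEev : Eev D j N T = {ω | P (vOf D N ω)} := by
    ext ω
    constructor
    · intro h i hi; exact h (i.val + 1) hi
    · intro h m hm
      have hm' := Finset.mem_Icc.1 hm
      have h1 : 1 ≤ m := le_trans hj hm'.1
      have hlt : m - 1 < N := by omega
      have hmm : (⟨m - 1, hlt⟩ : Fin N).val + 1 = m := by simp; omega
      have key := h ⟨m - 1, hlt⟩ (by rw [hmm]; exact hm)
      simpa [vOf, Nat.sub_add_cancel h1] using key
  have hA : MeasurableSet {ω : Ω | D (N+1) ω = j} := (hD (N+1)) (measurableSet_singleton j)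
  have h1 := partition_lemma μ hD hrange N {ω : Ω | D (N+1) ω = j} hA P
  have h2 := partition_lemma μ hD hrange N Set.univ MeasurableSet.univ P
  rw [Set.univ_inter] at h2
  simp only [Set.univ_inter] at h2
  -- per-history computation
  have key : ∀ v ∈ (Fintype.piFinset (fun i : Fin N => Finset.Icc 1 (i.val + 1))).filter P,
      μ ({ω : Ω | D (N+1) ω = j} ∩ Gset D N v) = ENNReal.ofReal r * μ (Gset D N v) := by
    intro v hv
    have hPv : P v := (Finset.mem_filter.1 hv).2
    set hfun : ℕ → ℕ := fun m => if hm : 1 ≤ m ∧ m ≤ N then v ⟨m - 1, by omega⟩ else 0 with hhfun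
    have hvv : ∀ m (h1 : 1 ≤ m) (h2 : m ≤ N), hfun m = v ⟨m - 1, by omega⟩ := by
      intro m h1 h2
      simp only [hhfun, dif_pos (And.intro h1 h2)]
    have hev : {ω : Ω | ∀ m, 1 ≤ m → m < N + 1 → D m ω = hfun m} = Gset D N v := by
      ext ω
      constructor
      · intro h i
        have h1 : 1 ≤ i.val + 1 := Nat.succ_le_succ (Nat.zero_le _)
        have h2 : i.val + 1 ≤ N := i.isLt
        have := h (i.val + 1) h1 (by omega)
        rw [hvv _ h1 h2] at this
        convert this using 2
        exact Fin.ext (by simp)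
      · intro h m h1 h2
        have h2' : m ≤ N := by omega
        have hlt : m - 1 < N := by omega
        have hmm : (⟨m - 1, hlt⟩ : Fin N).val + 1 = m := by simp; omega
        have := h ⟨m - 1, hlt⟩
        rw [hmm] at this
        rw [this, hvv m h1 h2']
    have hmod := hmodel (N+1) (Nat.succ_le_succ (Nat.zero_le _)) j hj hjN hfun
    rw [hev] at hmod
    rw [hmod]
    congr 1
    congr 1
    -- urnRatio Δ j (N+1) hfun = r
    rw [urnRatio, hr]
    have hsub : (N + 1) - 1 = N := rfl
    rw [hsub]
    congr 1
    · congr 1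
      have : ∀ m ∈ Finset.Icc j N, Δ m * (if hfun m = j then (1:ℝ) else 0)
          = (if m ∈ T then Δ m else 0) := by
        intro m hm
        have hm' := Finset.mem_Icc.1 hm
        have h1 : 1 ≤ m := le_trans hj hm'.1
        have hlt : m - 1 < N := by omega
        have hmm : (⟨m - 1, hlt⟩ : Fin N).val + 1 = m := by simp; omega
        have hiff := hPv ⟨m - 1, hlt⟩ (by rw [hmm]; exact hm)
        rw [hmm] at hiff
        rw [hvv m h1 hm'.2]
        rw [if_congr hiff rfl rfl]
        by_cases hmt : m ∈ T <;> simp [hmt]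
      rw [Finset.sum_congr rfl this, ← Finset.sum_filter,
        Finset.filter_mem_eq_inter, Finset.inter_eq_right.2 hT]
    · push_cast; ring
  calc μ ({ω : Ω | D (N+1) ω = j} ∩ Eev D j N T)
      = ∑ v ∈ (Fintype.piFinset (fun i : Fin N => Finset.Icc 1 (i.val + 1))).filter P,
        μ ({ω : Ω | D (N+1) ω = j} ∩ Gset D N v) := by rw [hEev]; exact h1
    _ = ∑ v ∈ (Fintype.piFinset (fun i : Fin N => Finset.Icc 1 (i.val + 1))).filter P,
        ENNReal.ofReal r * μ (Gset D N v) := Finset.sum_congr rfl key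
    _ = ENNReal.ofReal r * μ (Eev D j N T) := by
        rw [← Finset.mul_sum, hEev]; congr 1; exact h2.symm

lemma draw_step_not {Ω : Type*} [MeasurableSpace Ω] (μ : Measure Ω) [IsProbabilityMeasure μ]
    (Δ : ℕ → ℝ) (hΔ : ∀ n, 1 ≤ n → 0 < Δ n) {D : ℕ → Ω → ℕ} (hD : ∀ n, Measurable (D n))
    (hrange : ∀ n ω, 1 ≤ n → D n ω ∈ Finset.Icc 1 n)
    (hmodel : ∀ n, 1 ≤ n → ∀ j, 1 ≤ j → j ≤ n → ∀ h : ℕ → ℕ,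
      μ ({ω | D n ω = j} ∩ {ω | ∀ m, 1 ≤ m → m < n → D m ω = h m}) =
        ENNReal.ofReal (urnRatio Δ j n h) *
          μ {ω | ∀ m, 1 ≤ m → m < n → D m ω = h m})
    (j N : ℕ) (hj : 1 ≤ j) (hjN : j ≤ N + 1)
    (T : Finset ℕ) (hT : T ⊆ Finset.Icc j N) :
    μ ({ω | ¬ D (N+1) ω = j} ∩ Eev D j N T) =
      ENNReal.ofReal (((N:ℝ) + ∑ m ∈ Finset.Icc 1 N \ T, Δ m) /
          (((N:ℝ) + 1) + ∑ m ∈ Finset.Icc 1 N, Δ m)) * μ (Eev D j N T) := by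
  classical
  have hstep := draw_step μ Δ hD hrange hmodel j N hj hjN T hT
  set E := Eev D j N T with hE
  set d : ℝ := ((N:ℝ) + 1) + ∑ m ∈ Finset.Icc 1 N, Δ m with hd
  set r : ℝ := (1 + ∑ i ∈ T, Δ i) / d with hr
  have hT1 : T ⊆ Finset.Icc 1 N := hT.trans (by
    intro x hx; have := Finset.mem_Icc.1 hx; exact Finset.mem_Icc.2 ⟨le_trans hj this.1, this.2⟩)
  have hTpos : ∀ i ∈ T, 1 ≤ i := fun i hi => (Finset.mem_Icc.1 (hT1 hi)).1
  have hsum_nonneg : (0:ℝ) ≤ ∑ i ∈ T, Δ i := sum_delta_nonneg Δ hΔ T hTpos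
  have hfull_nonneg : (0:ℝ) ≤ ∑ m ∈ Finset.Icc 1 N, Δ m :=
    sum_delta_nonneg Δ hΔ _ (fun i hi => (Finset.mem_Icc.1 hi).1)
  have hdpos : 0 < d := by rw [hd]; positivity
  have hsub : ∑ i ∈ T, Δ i ≤ ∑ m ∈ Finset.Icc 1 N, Δ m :=
    Finset.sum_le_sum_of_subset_of_nonneg hT1 (fun i hi _ => (hΔ i (Finset.mem_Icc.1 hi).1).le)
  have hr0 : 0 ≤ r := by rw [hr]; positivity
  have hr1 : r ≤ 1 := by
    rw [hr, div_le_one hdpos, hd]; linarith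
  have hone : (1:ℝ) - r = ((N:ℝ) + ∑ m ∈ Finset.Icc 1 N \ T, Δ m) / d := by
    rw [Finset.sum_sdiff_eq_sub hT1, hr]
    field_simp
    ring
  have hEmeas : MeasurableSet E := Eev_meas hD j N T
  have hAmeas : MeasurableSet ({ω : Ω | D (N+1) ω = j} ∩ E) :=
    ((hD (N+1)) (measurableSet_singleton j)).inter hEmeas
  have hset : {ω : Ω | ¬ D (N+1) ω = j} ∩ E = E \ ({ω : Ω | D (N+1) ω = j} ∩ E) := by
    ext ω; simp only [Set.mem_inter_iff, Set.mem_setOf_eq, Set.mem_diff]; tauto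
  rw [hset, measure_diff Set.inter_subset_right hAmeas.nullMeasurableSet (measure_ne_top μ _),
    hstep]
  rw [← hone]
  rw [ENNReal.ofReal_sub 1 hr0, ENNReal.ofReal_one]
  rw [ENNReal.sub_mul (fun _ _ => measure_ne_top μ E), one_mul]

noncomputable def Wval (Δ : ℕ → ℝ) (j N : ℕ) (T : Finset ℕ) : ℝ :=
  ((∏ i ∈ T, (1 + ∑ i' ∈ T.filter (fun i' => i' < i), Δ i')) *
    ∏ p ∈ Finset.Icc j N \ T, (((p : ℝ) - 1) + ∑ l ∈ Finset.Icc 1 (p - 1) \ T, Δ l)) /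
  ∏ q ∈ Finset.Icc j N, ((q : ℝ) + ∑ m ∈ Finset.Icc 1 (q - 1), Δ m)

lemma Wden_step (Δ : ℕ → ℝ) (j N : ℕ) (hjN : j ≤ N + 1) :
    ∏ q ∈ Finset.Icc j (N+1), ((q : ℝ) + ∑ m ∈ Finset.Icc 1 (q - 1), Δ m)
      = (((N:ℝ) + 1) + ∑ m ∈ Finset.Icc 1 N, Δ m) *
        ∏ q ∈ Finset.Icc j N, ((q : ℝ) + ∑ m ∈ Finset.Icc 1 (q - 1), Δ m) := by
  have hnotinIcc : N+1 ∉ Finset.Icc j N := by simp [Finset.mem_Icc]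
  rw [iccSuccInsert j N hjN, Finset.prod_insert hnotinIcc]
  congr 2
  push_cast
  ring

lemma Wstep_yes (Δ : ℕ → ℝ) (j N : ℕ) (hj : 1 ≤ j) (hjN : j ≤ N + 1)
    (T : Finset ℕ) (hT : T ⊆ Finset.Icc j (N+1)) (hmem : N+1 ∈ T) :
    Wval Δ j (N+1) T =
      ((1 + ∑ i ∈ T.erase (N+1), Δ i) / (((N:ℝ) + 1) + ∑ m ∈ Finset.Icc 1 N, Δ m)) *
        Wval Δ j N (T.erase (N+1)) := by
  classical
  have hnotin : N+1 ∉ T.erase (N+1) := Finset.notMem_erase _ _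
  have hTle : ∀ x ∈ T, x ≤ N+1 := fun x hx => (Finset.mem_Icc.1 (hT hx)).2
  have hfilt : T.filter (fun i' => i' < N+1) = T.erase (N+1) := by
    ext x
    simp only [Finset.mem_filter, Finset.mem_erase]
    constructor
    · rintro ⟨hx, hlt⟩; exact ⟨by omega, hx⟩
    · rintro ⟨hne, hx⟩; exact ⟨hx, lt_of_le_of_ne (hTle x hx) hne⟩
  have hnum1 : (∏ i ∈ T, (1 + ∑ i' ∈ T.filter (fun i' => i' < i), Δ i'))
      = (1 + ∑ i' ∈ T.erase (N+1), Δ i') *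
        ∏ i ∈ T.erase (N+1), (1 + ∑ i' ∈ (T.erase (N+1)).filter (fun i' => i' < i), Δ i') := by
    rw [← Finset.mul_prod_erase T _ hmem, hfilt]
    congr 1
    refine Finset.prod_congr rfl fun i hi => ?_
    have hi' := Finset.mem_erase.1 hi
    have hile : i ≤ N + 1 := hTle i hi'.2
    congr 1
    refine Finset.sum_congr ?_ (fun _ _ => rfl)
    ext x
    simp only [Finset.mem_filter, Finset.mem_erase]
    constructor
    · rintro ⟨hx, hlt⟩
      have : i ≤ N := by rcases hi' with ⟨hne, _⟩; omega
      exact ⟨⟨by omega, hx⟩, hlt⟩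
    · rintro ⟨⟨_, hx⟩, hlt⟩; exact ⟨hx, hlt⟩
  have hsets : Finset.Icc j (N+1) \ T = Finset.Icc j N \ T.erase (N+1) := by
    ext x
    simp only [Finset.mem_sdiff, Finset.mem_Icc, Finset.mem_erase]
    constructor
    · rintro ⟨⟨h1, h2⟩, h3⟩
      have hx : x ≠ N+1 := fun h => h3 (h ▸ hmem)
      exact ⟨⟨h1, by omega⟩, fun hc => h3 hc.2⟩
    · rintro ⟨⟨h1, h2⟩, h3⟩
      exact ⟨⟨h1, by omega⟩, fun hc => h3 ⟨by omega, hc⟩⟩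
  have hnum2 : (∏ p ∈ Finset.Icc j (N+1) \ T,
        (((p : ℝ) - 1) + ∑ l ∈ Finset.Icc 1 (p - 1) \ T, Δ l))
      = ∏ p ∈ Finset.Icc j N \ T.erase (N+1),
        (((p : ℝ) - 1) + ∑ l ∈ Finset.Icc 1 (p - 1) \ T.erase (N+1), Δ l) := by
    rw [hsets]
    refine Finset.prod_congr rfl fun p hp => ?_
    have hp' := Finset.mem_sdiff.1 hp
    have hpN : p ≤ N := (Finset.mem_Icc.1 hp'.1).2
    congr 1
    refine Finset.sum_congr ?_ (fun _ _ => rfl)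
    ext x
    simp only [Finset.mem_sdiff, Finset.mem_Icc, Finset.mem_erase]
    constructor
    · rintro ⟨⟨h1, h2⟩, h3⟩; exact ⟨⟨h1, h2⟩, fun hc => h3 hc.2⟩
    · rintro ⟨⟨h1, h2⟩, h3⟩; exact ⟨⟨h1, h2⟩, fun hc => h3 ⟨by omega, hc⟩⟩
  rw [Wval, Wval, hnum1, hnum2, Wden_step Δ j N hjN, mul_assoc, mul_div_mul_comm]

lemma Wstep_no (Δ : ℕ → ℝ) (j N : ℕ) (hj : 1 ≤ j) (hjN : j ≤ N + 1)
    (T : Finset ℕ) (hT : T ⊆ Finset.Icc j N) :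
    Wval Δ j (N+1) T =
      ((((N:ℝ)) + ∑ m ∈ Finset.Icc 1 N \ T, Δ m) /
          (((N:ℝ) + 1) + ∑ m ∈ Finset.Icc 1 N, Δ m)) * Wval Δ j N T := by
  classical
  have hmemno : N+1 ∉ T := fun h => by
    have := (Finset.mem_Icc.1 (hT h)).2; omega
  have hnotin : N+1 ∉ Finset.Icc j N \ T := fun h => by
    have := (Finset.mem_Icc.1 (Finset.mem_sdiff.1 h).1).2; omega
  have hsets : Finset.Icc j (N+1) \ T = insert (N+1) (Finset.Icc j N \ T) := by
    ext x
    simp only [Finset.mem_sdiff, Finset.mem_Icc, Finset.mem_insert]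
    constructor
    · rintro ⟨⟨h1, h2⟩, h3⟩
      by_cases hx : x = N+1
      · exact Or.inl hx
      · exact Or.inr ⟨⟨h1, by omega⟩, h3⟩
    · rintro (h | ⟨⟨h1, h2⟩, h3⟩)
      · exact ⟨⟨by omega, by omega⟩, h ▸ hmemno⟩
      · exact ⟨⟨h1, by omega⟩, h3⟩
  have hnum2 : (∏ p ∈ Finset.Icc j (N+1) \ T,
        (((p : ℝ) - 1) + ∑ l ∈ Finset.Icc 1 (p - 1) \ T, Δ l))
      = (((N:ℝ)) + ∑ m ∈ Finset.Icc 1 N \ T, Δ m) *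
        ∏ p ∈ Finset.Icc j N \ T, (((p : ℝ) - 1) + ∑ l ∈ Finset.Icc 1 (p - 1) \ T, Δ l) := by
    rw [hsets, Finset.prod_insert hnotin]
    congr 2
    push_cast
    ring
  rw [Wval, Wval, hnum2, Wden_step Δ j N hjN, mul_left_comm, mul_div_mul_comm]

lemma main_ind {Ω : Type*} [MeasurableSpace Ω] (μ : Measure Ω) [IsProbabilityMeasure μ]
    (Δ : ℕ → ℝ) (hΔ : ∀ n, 1 ≤ n → 0 < Δ n) {D : ℕ → Ω → ℕ} (hD : ∀ n, Measurable (D n))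
    (hrange : ∀ n ω, 1 ≤ n → D n ω ∈ Finset.Icc 1 n)
    (hmodel : ∀ n, 1 ≤ n → ∀ j, 1 ≤ j → j ≤ n → ∀ h : ℕ → ℕ,
      μ ({ω | D n ω = j} ∩ {ω | ∀ m, 1 ≤ m → m < n → D m ω = h m}) =
        ENNReal.ofReal (urnRatio Δ j n h) *
          μ {ω | ∀ m, 1 ≤ m → m < n → D m ω = h m})
    (j : ℕ) (hj : 1 ≤ j) :
    ∀ N, ∀ T ⊆ Finset.Icc j N, μ (Eev D j N T) = ENNReal.ofReal (Wval Δ j N T) := by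
  classical
  have hempty : ∀ N (T : Finset ℕ), Finset.Icc j N = ∅ → T ⊆ Finset.Icc j N →
      μ (Eev D j N T) = ENNReal.ofReal (Wval Δ j N T) := by
    intro N T hicc hT
    have hTe : T = ∅ := Finset.subset_empty.1 (hicc ▸ hT)
    have hE : Eev D j N T = Set.univ := by
      ext ω; simp [Eev, hicc]
    rw [hE, hTe, Wval]
    simp [hicc]
  intro N
  induction N with
  | zero =>
    intro T hT
    exact hempty 0 T (Finset.Icc_eq_empty (by omega)) hT
  | succ N ih =>
    intro T hT
    by_cases hjN : j ≤ N + 1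
    · have hfull : (0:ℝ) ≤ ∑ m ∈ Finset.Icc 1 N, Δ m :=
        sum_delta_nonneg Δ hΔ _ (fun i hi => (Finset.mem_Icc.1 hi).1)
      have hdpos : (0:ℝ) < ((N:ℝ) + 1) + ∑ m ∈ Finset.Icc 1 N, Δ m := by positivity
      by_cases hmem : N + 1 ∈ T
      · set T' := T.erase (N+1) with hT'def
        have hT' : T' ⊆ Finset.Icc j N := by
          intro x hx
          have hx' := Finset.mem_erase.1 hx
          have := Finset.mem_Icc.1 (hT hx'.2)
          exact Finset.mem_Icc.2 ⟨this.1, by omega⟩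
        have hEsplit : Eev D j (N+1) T = {ω | D (N+1) ω = j} ∩ Eev D j N T' := by
          ext ω
          simp only [Eev, Set.mem_setOf_eq, Set.mem_inter_iff]
          constructor
          · intro h
            refine ⟨(h (N+1) (Finset.mem_Icc.2 ⟨hjN, le_refl _⟩)).2 hmem, fun m hm => ?_⟩
            have hm' := Finset.mem_Icc.1 hm
            rw [h m (Finset.mem_Icc.2 ⟨hm'.1, by omega⟩), hT'def, Finset.mem_erase]
            constructor
            · intro hx; exact ⟨by omega, hx⟩
            · intro hx; exact hx.2
          · rintro ⟨hD1, h⟩ m hm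
            have hm' := Finset.mem_Icc.1 hm
            by_cases hmN : m = N + 1
            · subst hmN; simp [hD1, hmem]
            · have := h m (Finset.mem_Icc.2 ⟨hm'.1, by omega⟩)
              rw [this, hT'def, Finset.mem_erase]
              constructor
              · intro hx; exact hx.2
              · intro hx; exact ⟨hmN, hx⟩
        have hr0 : (0:ℝ) ≤ (1 + ∑ i ∈ T', Δ i) / (((N:ℝ) + 1) + ∑ m ∈ Finset.Icc 1 N, Δ m) := by
          have : (0:ℝ) ≤ ∑ i ∈ T', Δ i :=
            sum_delta_nonneg Δ hΔ _ (fun i hi => le_trans hj (Finset.mem_Icc.1 (hT' hi)).1)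
          positivity
        rw [hEsplit, draw_step μ Δ hD hrange hmodel j N hj hjN T' hT', ih T' hT',
          Wstep_yes Δ j N hj hjN T hT hmem, ENNReal.ofReal_mul hr0]
      · have hTsub : T ⊆ Finset.Icc j N := by
          intro x hx
          have := Finset.mem_Icc.1 (hT hx)
          have hxne : x ≠ N + 1 := fun h => hmem (h ▸ hx)
          exact Finset.mem_Icc.2 ⟨this.1, by omega⟩
        have hEsplit : Eev D j (N+1) T = {ω | ¬ D (N+1) ω = j} ∩ Eev D j N T := by
          ext ω
          simp only [Eev, Set.mem_setOf_eq, Set.mem_inter_iff]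
          constructor
          · intro h
            refine ⟨fun hc => hmem ((h (N+1) (Finset.mem_Icc.2 ⟨hjN, le_refl _⟩)).1 hc),
              fun m hm => ?_⟩
            have hm' := Finset.mem_Icc.1 hm
            exact h m (Finset.mem_Icc.2 ⟨hm'.1, by omega⟩)
          · rintro ⟨hD1, h⟩ m hm
            have hm' := Finset.mem_Icc.1 hm
            by_cases hmN : m = N + 1
            · subst hmN
              constructor
              · intro hc; exact absurd hc hD1
              · intro hc; exact absurd hc hmem
            · exact h m (Finset.mem_Icc.2 ⟨hm'.1, by omega⟩)
        have hr0 : (0:ℝ) ≤ ((N:ℝ) + ∑ m ∈ Finset.Icc 1 N \ T, Δ m) /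
            (((N:ℝ) + 1) + ∑ m ∈ Finset.Icc 1 N, Δ m) := by
          have : (0:ℝ) ≤ ∑ m ∈ Finset.Icc 1 N \ T, Δ m :=
            sum_delta_nonneg Δ hΔ _ (fun i hi => (Finset.mem_Icc.1 (Finset.mem_sdiff.1 hi).1).1)
          positivity
        rw [hEsplit, draw_step_not μ Δ hΔ hD hrange hmodel j N hj hjN T hTsub, ih T hTsub,
          Wstep_no Δ j N hj hjN T hTsub, ENNReal.ofReal_mul hr0]
    · exact hempty (N+1) T (Finset.Icc_eq_empty (by omega)) hT

lemma Wval_nonneg (Δ : ℕ → ℝ) (hΔ : ∀ n, 1 ≤ n → 0 < Δ n) (j N : ℕ) (hj : 1 ≤ j)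
    (T : Finset ℕ) (hT : T ⊆ Finset.Icc j N) : 0 ≤ Wval Δ j N T := by
  have key : ∀ s : Finset ℕ, (∀ i ∈ s, 1 ≤ i) → 0 ≤ ∑ i ∈ s, Δ i := sum_delta_nonneg Δ hΔ
  refine div_nonneg (mul_nonneg ?_ ?_) ?_
  · refine Finset.prod_nonneg fun i hi => ?_
    have := key (T.filter (fun i' => i' < i))
      (fun x hx => le_trans hj (Finset.mem_Icc.1 (hT (Finset.mem_filter.1 hx).1)).1)
    linarith
  · refine Finset.prod_nonneg fun p hp => ?_
    have hp1 : 1 ≤ p := le_trans hj (Finset.mem_Icc.1 (Finset.mem_sdiff.1 hp).1).1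
    have h1 : (1:ℝ) ≤ (p:ℝ) := by exact_mod_cast hp1
    have := key (Finset.Icc 1 (p-1) \ T) (fun x hx => (Finset.mem_Icc.1 (Finset.mem_sdiff.1 hx).1).1)
    linarith
  · refine Finset.prod_nonneg fun q hq => ?_
    have hq1 : 1 ≤ q := le_trans hj (Finset.mem_Icc.1 hq).1
    have h1 : (1:ℝ) ≤ (q:ℝ) := by exact_mod_cast hq1
    have := key (Finset.Icc 1 (q-1)) (fun x hx => (Finset.mem_Icc.1 hx).1)
    linarith

lemma den_reindex (Δ : ℕ → ℝ) (j t : ℕ) (hj : 1 ≤ j) (hjt : j ≤ t) :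
    ∏ n ∈ Finset.Icc (j-1) (t-1), (((n:ℝ) + 1) + ∑ m ∈ Finset.Icc 1 n, Δ m)
      = ∏ q ∈ Finset.Icc j t, ((q:ℝ) + ∑ m ∈ Finset.Icc 1 (q-1), Δ m) := by
  have h1 : Finset.Icc j t = Finset.map (addRightEmbedding 1) (Finset.Icc (j-1) (t-1)) := by
    rw [Finset.map_add_right_Icc]
    congr 1 <;> omega
  rw [h1, Finset.prod_map]
  refine Finset.prod_congr rfl fun n hn => ?_
  simp only [addRightEmbedding_apply]
  push_cast
  norm_num

/-- the distribution of the number of draws `N_{j,t}` of color `c_j` up to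
time `t`, for `1 < j ≤ t` and `1 ≤ k ≤ t - j + 1`.  A strictly increasing tuple
`(i_1 < ⋯ < i_k)` with `j ≤ i_1`, `i_k ≤ t` is encoded as a `k`-element subset `S` of
`Icc j t`; then `∏_{a=1}^k (1 + ∑_{b<a} Δ_{i_b}) = ∏_{i ∈ S} (1 + ∑_{i' ∈ S, i' < i} Δ i')`,
and `p ∉ {i_1,…,i_k}` (resp. `l ∉ {i_1,…,i_k}`) becomes `p ∉ S` (resp. `l ∉ S`). -/
theorem prob_drawCount_eq
    {Ω : Type*} [MeasurableSpace Ω] (μ : Measure Ω) [IsProbabilityMeasure μ]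
    (Δ : ℕ → ℝ) (hΔ : ∀ n, 1 ≤ n → 0 < Δ n)
    (D : ℕ → Ω → ℕ) (hD : ∀ n, Measurable (D n))
    (hrange : ∀ n ω, 1 ≤ n → D n ω ∈ Finset.Icc 1 n)
    (hmodel : ∀ n, 1 ≤ n → ∀ j, 1 ≤ j → j ≤ n → ∀ h : ℕ → ℕ,
      μ ({ω | D n ω = j} ∩ {ω | ∀ m, 1 ≤ m → m < n → D m ω = h m}) =
        ENNReal.ofReal (urnRatio Δ j n h) *
          μ {ω | ∀ m, 1 ≤ m → m < n → D m ω = h m})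
    (t j k : ℕ) (hj1 : 1 < j) (hjt : j ≤ t) (hk1 : 1 ≤ k) (hk : k ≤ t - j + 1) :
    μ {ω | drawCount D j t ω = k} =
      ENNReal.ofReal
        (∑ S ∈ Finset.powersetCard k (Finset.Icc j t),
          ((∏ i ∈ S, (1 + ∑ i' ∈ S.filter (fun i' => i' < i), Δ i')) *
            ∏ p ∈ Finset.Icc j t \ S,
              (((p : ℝ) - 1) + ∑ l ∈ Finset.Icc 1 (p - 1) \ S, Δ l)) /
          ∏ n ∈ Finset.Icc (j - 1) (t - 1),
            (((n : ℝ) + 1) + ∑ m ∈ Finset.Icc 1 n, Δ m)) := by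
  classical
  have hj : 1 ≤ j := le_of_lt hj1
  have hdecomp : {ω : Ω | drawCount D j t ω = k}
      = ⋃ S ∈ Finset.powersetCard k (Finset.Icc j t), Eev D j t S := by
    ext ω
    simp only [Set.mem_setOf_eq, Set.mem_iUnion, exists_prop]
    constructor
    · intro h
      refine ⟨(Finset.Icc j t).filter (fun n => D n ω = j),
        Finset.mem_powersetCard.2 ⟨Finset.filter_subset _ _, h⟩, ?_⟩
      intro m hm
      simp [Finset.mem_filter, hm]
    · rintro ⟨S, hS, hωS⟩
      have hS' := Finset.mem_powersetCard.1 hS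
      have hfe : (Finset.Icc j t).filter (fun n => D n ω = j) = S := by
        ext x
        simp only [Finset.mem_filter]
        constructor
        · rintro ⟨hx, hDx⟩; exact (hωS x hx).1 hDx
        · intro hx; exact ⟨hS'.1 hx, (hωS x (hS'.1 hx)).2 hx⟩
      rw [drawCount, hfe]
      exact hS'.2
  have hdisj : (↑(Finset.powersetCard k (Finset.Icc j t)) : Set (Finset ℕ)).PairwiseDisjoint
      (fun S => Eev D j t S) := by
    intro S hS S' hS' hne
    refine Set.disjoint_left.2 fun ω h1 h2 => hne ?_
    have hSsub := (Finset.mem_powersetCard.1 (by exact_mod_cast hS)).1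
    have hS'sub := (Finset.mem_powersetCard.1 (by exact_mod_cast hS')).1
    ext x
    constructor
    · intro hx
      exact (h2 x (hSsub hx)).1 ((h1 x (hSsub hx)).2 hx)
    · intro hx
      exact (h1 x (hS'sub hx)).1 ((h2 x (hS'sub hx)).2 hx)
  calc μ {ω : Ω | drawCount D j t ω = k}
      = ∑ S ∈ Finset.powersetCard k (Finset.Icc j t), μ (Eev D j t S) := by
        rw [hdecomp]
        exact measure_biUnion_finset hdisj (fun S _ => Eev_meas hD j t S)
    _ = ∑ S ∈ Finset.powersetCard k (Finset.Icc j t), ENNReal.ofReal (Wval Δ j t S) :=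
        Finset.sum_congr rfl fun S hS =>
          main_ind μ Δ hΔ hD hrange hmodel j hj t S (Finset.mem_powersetCard.1 hS).1
    _ = ENNReal.ofReal (∑ S ∈ Finset.powersetCard k (Finset.Icc j t), Wval Δ j t S) :=
        (ENNReal.ofReal_sum_of_nonneg fun S hS =>
          Wval_nonneg Δ hΔ j t hj S (Finset.mem_powersetCard.1 hS).1).symm
    _ = _ := by
        congr 1
        refine Finset.sum_congr rfl fun S hS => ?_
        rw [Wval, ← den_reindex Δ j t hj hjt]
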